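/- If T is a t-solely balanced μ-way (v,k,t) Steiner trade, then the μ-way (v+μ, k+1, t+1) trade T* obtained from T by the cyclic adjunction construction is a Steiner trade. -/

import Mathlib

/-- The blocks of a collection `Ti` that contain a given subset `S`. -/
def blocksContaining (Ti : Finset (Finset ℕ)) (S : Finset ℕ) : Finset (Finset ℕ) :=
  Ti.filter (fun B => S ⊆ B)

/-- `T` is a μ-way (v,k,t) trade of volume `m` with point set `V`:
μ pairwise disjoint collections, each of `m` k-subsets of the v-set `V`,
such that every t-subset of `V` is contained in the same number of blocks
of each collection. -/
structure IsTrade (μ v k t m : ℕ) (V : Finset ℕ) (T : Fin μ → Finset (Finset ℕ)) : Prop where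
  cardV : V.card = v
  volume : ∀ i, (T i).card = m
  blockSub : ∀ i, ∀ B ∈ T i, B ⊆ V
  blockCard : ∀ i, ∀ B ∈ T i, B.card = k
  disj : ∀ i j, i ≠ j → Disjoint (T i) (T j)
  balanced : ∀ S : Finset ℕ, S.card = t → ∀ i j,
    (blocksContaining (T i) S).card = (blocksContaining (T j) S).card

/-- A μ-way (v,k,t) Steiner trade: a trade in which every t-subset occurs
at most once in each collection. -/
def IsSteinerTrade (μ v k t m : ℕ) (V : Finset ℕ) (T : Fin μ → Finset (Finset ℕ)) : Prop :=
  IsTrade μ v k t m V T ∧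
  ∀ S : Finset ℕ, S.card = t → ∀ i, (blocksContaining (T i) S).card ≤ 1

/-- The foundation of a μ-way trade: the union of all its blocks. -/
def foundation {μ : ℕ} (T : Fin μ → Finset (Finset ℕ)) : Finset ℕ :=
  Finset.univ.biUnion (fun i => (T i).biUnion id)

/-- `T` is t-solely balanced: no two distinct collections contain a common
(t+1)-subset. -/
def SolelyBalanced {μ : ℕ} (t : ℕ) (T : Fin μ → Finset (Finset ℕ)) : Prop :=
  ∀ i j : Fin μ, i ≠ j → ∀ S : Finset ℕ, S.card = t + 1 →
    ¬ ((∃ B ∈ T i, S ⊆ B) ∧ (∃ B ∈ T j, S ⊆ B))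

lemma insert_inj_of_not_mem {a b : ℕ} {B B' : Finset ℕ}
    (haB : a ∉ B) (haB' : a ∉ B') (hbB' : b ∉ B')
    (h : insert a B = insert b B') : a = b ∧ B = B' := by
  have hab : a = b := by
    have h1 : a ∈ insert b B' := h ▸ Finset.mem_insert_self a B
    rcases Finset.mem_insert.mp h1 with h' | h'
    · exact h'
    · exact absurd h' haB'
  subst hab
  refine ⟨rfl, ?_⟩
  have h2 := congrArg (Finset.erase · a) h
  simpa [Finset.erase_insert haB, Finset.erase_insert hbB'] using h2

/-- If `T` is a t-solely balanced μ-way (v,k,t) Steiner trade, then the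
μ-way (v+μ, k+1, t+1) trade obtained by the cyclic adjunction construction
is a Steiner trade. -/
theorem cyclic_construction_steiner (μ v k t m : ℕ) (hμ : 2 ≤ μ) (V : Finset ℕ)
    (T : Fin μ → Finset (Finset ℕ)) (hT : IsSteinerTrade μ v k t m V T)
    (hsb : SolelyBalanced t T)
    (x : Fin μ → ℕ) (hxinj : Function.Injective x) (hxV : ∀ j, x j ∉ V) :
    IsSteinerTrade μ (v + μ) (k + 1) (t + 1) (μ * m) (V ∪ Finset.univ.image x)
      (fun i => Finset.univ.biUnion
        (fun j : Fin μ => (T (i + j)).image (insert (x j)))) := by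
  haveI : NeZero μ := ⟨by omega⟩
  obtain ⟨htr, hst⟩ := hT
  have hxB : ∀ (l : Fin μ) (B : Finset ℕ), B ∈ T l → ∀ j, x j ∉ B :=
    fun l B hB j h => hxV j (htr.blockSub l B hB h)
  -- images for distinct j are disjoint
  have hdisjim : ∀ (l l' j j' : Fin μ), j ≠ j' →
      Disjoint ((T l).image (insert (x j))) ((T l').image (insert (x j'))) := by
    intro l l' j j' hjj'
    rw [Finset.disjoint_left]
    rintro C hC hC'
    obtain ⟨B, hB, rfl⟩ := Finset.mem_image.mp hC
    obtain ⟨B', hB', hBB'⟩ := Finset.mem_image.mp hC'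
    have := insert_inj_of_not_mem (hxB l B hB j) (hxB l' B' hB' j)
      (hxB l' B' hB' j') hBB'.symm
    exact hjj' (hxinj this.1)
  have hinjOn : ∀ (l j : Fin μ), Set.InjOn (insert (x j)) ((T l : Finset (Finset ℕ)) : Set (Finset ℕ)) := by
    intro l j B hB B' hB' h
    exact (insert_inj_of_not_mem (hxB l B hB j) (hxB l B' hB' j)
      (hxB l B' hB' j) h).2
  -- counting lemma
  have hcount : ∀ (i : Fin μ) (S : Finset ℕ),
      (blocksContaining (Finset.univ.biUnion
        (fun j : Fin μ => (T (i + j)).image (insert (x j)))) S).card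
      = ∑ j : Fin μ, ((T (i + j)).filter (fun B => S ⊆ insert (x j) B)).card := by
    intro i S
    unfold blocksContaining
    rw [Finset.filter_biUnion, Finset.card_biUnion]
    · refine Finset.sum_congr rfl fun j _ => ?_
      rw [Finset.filter_image, Finset.card_image_of_injOn]
      exact Set.InjOn.mono (fun B hB => (Finset.mem_filter.mp hB).1) (hinjOn (i + j) j)
    · intro a _ b _ hab
      exact Disjoint.mono (Finset.filter_subset _ _) (Finset.filter_subset _ _)
        (hdisjim (i + a) (i + b) a b hab)
  -- analysis of the per-j counts
  have hterm_nox : ∀ (i j : Fin μ) (S : Finset ℕ), (∀ j', x j' ∉ S) →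
      ((T (i + j)).filter (fun B => S ⊆ insert (x j) B))
        = blocksContaining (T (i + j)) S := by
    intro i j S hnx
    unfold blocksContaining
    refine Finset.filter_congr fun B hB => ?_
    constructor
    · intro h a ha
      rcases Finset.mem_insert.mp (h ha) with h' | h'
      · exact absurd (h' ▸ ha) (hnx j)
      · exact h'
    · intro h; exact h.trans (Finset.subset_insert _ _)
  constructor
  · constructor
    · -- cardV
      rw [Finset.card_union_of_disjoint, htr.cardV,
        Finset.card_image_of_injective _ hxinj, Finset.card_univ, Fintype.card_fin]
      rw [Finset.disjoint_right]
      rintro a ha haV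
      obtain ⟨j, _, rfl⟩ := Finset.mem_image.mp ha
      exact hxV j haV
    · -- volume
      intro i
      rw [Finset.card_biUnion (fun a _ b _ hab => hdisjim (i + a) (i + b) a b hab)]
      rw [Finset.sum_congr rfl (fun j _ => by
        rw [Finset.card_image_of_injOn (hinjOn (i + j) j), htr.volume])]
      simp [Finset.sum_const, mul_comm]
    · -- blockSub
      intro i C hC
      obtain ⟨j, _, hC2⟩ := Finset.mem_biUnion.mp hC
      obtain ⟨B, hB, rfl⟩ := Finset.mem_image.mp hC2
      intro a ha
      rcases Finset.mem_insert.mp ha with h' | h'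
      · exact Finset.mem_union_right _ (Finset.mem_image.mpr ⟨j, Finset.mem_univ j, h'.symm⟩)
      · exact Finset.mem_union_left _ (htr.blockSub _ B hB h')
    · -- blockCard
      intro i C hC
      obtain ⟨j, _, hC2⟩ := Finset.mem_biUnion.mp hC
      obtain ⟨B, hB, rfl⟩ := Finset.mem_image.mp hC2
      rw [Finset.card_insert_of_notMem (hxB _ B hB j), htr.blockCard _ B hB]
    · -- disj
      intro i i' hii'
      rw [Finset.disjoint_left]
      rintro C hC hC'
      obtain ⟨j, _, hC2⟩ := Finset.mem_biUnion.mp hC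
      obtain ⟨B, hB, hCeq⟩ := Finset.mem_image.mp hC2
      obtain ⟨j', _, hC2'⟩ := Finset.mem_biUnion.mp hC'
      obtain ⟨B', hB', hBB'⟩ := Finset.mem_image.mp hC2'
      rw [← hCeq] at hBB'
      obtain ⟨hxx, hBB⟩ := insert_inj_of_not_mem (hxB _ B hB j) (hxB _ B' hB' j)
        (hxB _ B' hB' j') hBB'.symm
      have hj : j = j' := hxinj hxx
      subst hj
      subst hBB
      have hne : i + j ≠ i' + j := fun h => hii' (by
        have := congrArg (· + (-j)) h
        simpa [add_assoc] using this)
      exact Finset.disjoint_left.mp (htr.disj _ _ hne) hB hB'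
    · -- balanced
      intro S hS i i'
      rw [hcount, hcount]
      by_cases hnx : ∀ j', x j' ∉ S
      · have := fun (i : Fin μ) j => hterm_nox i j S hnx
        simp only [this]
        have key : ∀ i₀ : Fin μ, ∑ j : Fin μ, (blocksContaining (T (i₀ + j)) S).card
            = ∑ l : Fin μ, (blocksContaining (T l) S).card := by
          intro i₀
          exact Fintype.sum_equiv (Equiv.addLeft i₀)
            (fun j => (blocksContaining (T (i₀ + j)) S).card)
            (fun l => (blocksContaining (T l) S).card) (fun j => rfl)
        rw [key i, key i']
      · push_neg at hnx
        obtain ⟨j₀, hj₀⟩ := hnx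
        by_cases hone : ∀ j', x j' ∈ S → j' = j₀
        · -- exactly one x in S
          have hterm : ∀ (i₀ j : Fin μ),
              ((T (i₀ + j)).filter (fun B => S ⊆ insert (x j) B))
              = if j = j₀ then blocksContaining (T (i₀ + j₀)) (S.erase (x j₀)) else ∅ := by
            intro i₀ j
            split_ifs with hjj
            · subst hjj
              unfold blocksContaining
              refine Finset.filter_congr fun B hB => ?_
              constructor
              · intro h a ha
                have ha' := Finset.mem_of_mem_erase ha
                rcases Finset.mem_insert.mp (h ha') with h' | h'
                · exact absurd h' (Finset.ne_of_mem_erase ha)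
                · exact h'
              · intro h a ha
                by_cases hax : a = x j
                · exact Finset.mem_insert.mpr (Or.inl hax)
                · exact Finset.mem_insert.mpr (Or.inr (h (Finset.mem_erase.mpr ⟨hax, ha⟩)))
            · refine Finset.filter_false_of_mem fun B hB h => ?_
              rcases Finset.mem_insert.mp (h hj₀) with h' | h'
              · exact hjj (hxinj h').symm
              · exact hxB _ B hB j₀ h'
          have hsum : ∀ i₀ : Fin μ,
              ∑ j : Fin μ, ((T (i₀ + j)).filter (fun B => S ⊆ insert (x j) B)).card
              = (blocksContaining (T (i₀ + j₀)) (S.erase (x j₀))).card := by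
            intro i₀
            rw [Finset.sum_congr rfl (fun j _ => by rw [hterm i₀ j])]
            rw [Finset.sum_eq_single j₀ (fun j _ hj => by simp [hj])
              (fun h => absurd (Finset.mem_univ j₀) h)]
            simp
          rw [hsum i, hsum i']
          exact htr.balanced _ (by rw [Finset.card_erase_of_mem hj₀, hS]; rfl) _ _
        · -- at least two x's in S : everything empty
          push_neg at hone
          obtain ⟨j₁, hj₁, hj₁ne⟩ := hone
          have hterm0 : ∀ (i₀ j : Fin μ),
              ((T (i₀ + j)).filter (fun B => S ⊆ insert (x j) B)) = ∅ := by
            intro i₀ j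
            refine Finset.filter_false_of_mem fun B hB h => ?_
            have hin : ∀ j', x j' ∈ S → x j' = x j := by
              intro j' hj'
              rcases Finset.mem_insert.mp (h hj') with h' | h'
              · exact h'
              · exact absurd h' (hxB _ B hB j')
            have e1 := hxinj (hin j₀ hj₀)
            have e2 := hxinj (hin j₁ hj₁)
            exact hj₁ne (e2.trans e1.symm)
          simp [hterm0]
  · -- Steiner condition
    intro S hS i
    rw [hcount]
    -- each term is ≤ 1
    have hle : ∀ j : Fin μ, ((T (i + j)).filter (fun B => S ⊆ insert (x j) B)).card ≤ 1 := by
      intro j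
      by_cases hnx : ∀ j', x j' ∉ S
      · rw [hterm_nox i j S hnx]
        obtain ⟨S', hS'sub, hS'card⟩ := Finset.exists_subset_card_eq
          (show t ≤ S.card by omega)
        calc (blocksContaining (T (i + j)) S).card
            ≤ (blocksContaining (T (i + j)) S').card := by
              apply Finset.card_le_card
              unfold blocksContaining
              exact Finset.monotone_filter_right _ (fun B _ h => hS'sub.trans h)
          _ ≤ 1 := hst S' hS'card (i + j)
      · push_neg at hnx
        obtain ⟨j₀, hj₀⟩ := hnx
        by_cases hjj : j = j₀
        · subst hjj
          have heq : ((T (i + j)).filter (fun B => S ⊆ insert (x j) B))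
              = blocksContaining (T (i + j)) (S.erase (x j)) := by
            unfold blocksContaining
            refine Finset.filter_congr fun B hB => ?_
            constructor
            · intro h a ha
              have ha' := Finset.mem_of_mem_erase ha
              rcases Finset.mem_insert.mp (h ha') with h' | h'
              · exact absurd h' (Finset.ne_of_mem_erase ha)
              · exact h'
            · intro h a ha
              by_cases hax : a = x j
              · exact Finset.mem_insert.mpr (Or.inl hax)
              · exact Finset.mem_insert.mpr (Or.inr (h (Finset.mem_erase.mpr ⟨hax, ha⟩)))
          rw [heq]
          exact hst _ (by rw [Finset.card_erase_of_mem hj₀, hS]; rfl) _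
        · have : ((T (i + j)).filter (fun B => S ⊆ insert (x j) B)) = ∅ := by
            refine Finset.filter_false_of_mem fun B hB h => ?_
            rcases Finset.mem_insert.mp (h hj₀) with h' | h'
            · exact hjj (hxinj h').symm
            · exact hxB _ B hB j₀ h'
          simp [this]
    -- at most one term is nonzero
    by_cases hz : ∀ j : Fin μ, ((T (i + j)).filter (fun B => S ⊆ insert (x j) B)).card = 0
    · simp [hz]
    · push_neg at hz
      obtain ⟨j₀, hj₀⟩ := hz
      have hrest : ∀ j : Fin μ, j ≠ j₀ →
          ((T (i + j)).filter (fun B => S ⊆ insert (x j) B)).card = 0 := by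
        intro j hjne
        by_contra hc
        -- both collections contain S... need S itself inside blocks
        obtain ⟨B₀, hB₀⟩ := Finset.card_pos.mp (Nat.pos_of_ne_zero hj₀)
        obtain ⟨B₁, hB₁⟩ := Finset.card_pos.mp (Nat.pos_of_ne_zero hc)
        rw [Finset.mem_filter] at hB₀ hB₁
        -- S has no x-elements here? not necessarily; but then S ⊆ B after removing x j
        -- If x j' ∈ S for some j', previous analysis: only j = j' term nonzero, contradiction.
        by_cases hnx : ∀ j', x j' ∉ S
        · have hSB₀ : S ⊆ B₀ := by
            intro a ha
            rcases Finset.mem_insert.mp (hB₀.2 ha) with h' | h'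
            · exact absurd (h' ▸ ha) (hnx j₀)
            · exact h'
          have hSB₁ : S ⊆ B₁ := by
            intro a ha
            rcases Finset.mem_insert.mp (hB₁.2 ha) with h' | h'
            · exact absurd (h' ▸ ha) (hnx j)
            · exact h'
          have hne : i + j ≠ i + j₀ := fun h => hjne (by
            have := congrArg (fun z => (-i) + z) h
            simpa [← add_assoc] using this)
          exact hsb (i + j) (i + j₀) hne S hS ⟨⟨B₁, hB₁.1, hSB₁⟩, ⟨B₀, hB₀.1, hSB₀⟩⟩
        · push_neg at hnx
          obtain ⟨j', hj'⟩ := hnx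
          have key : ∀ (jj : Fin μ) (B : Finset ℕ), B ∈ T (i + jj) →
              S ⊆ insert (x jj) B → jj = j' := by
            intro jj B hB h
            rcases Finset.mem_insert.mp (h hj') with h' | h'
            · exact (hxinj h').symm
            · exact absurd h' (hxB _ B hB j')
          have e0 := key j₀ B₀ hB₀.1 hB₀.2
          have e1 := key j B₁ hB₁.1 hB₁.2
          exact hjne (e1.trans e0.symm)
      calc ∑ j : Fin μ, ((T (i + j)).filter (fun B => S ⊆ insert (x j) B)).card
          = ((T (i + j₀)).filter (fun B => S ⊆ insert (x j₀) B)).card :=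
            Finset.sum_eq_single j₀ (fun j _ hj => hrest j hj) (fun h => absurd (Finset.mem_univ j₀) h)
        _ ≤ 1 := hle j₀
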